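/- arXiv:2405.00480 — 3 statements merged into one kernel-verified Lean document; each statement's English description precedes it below -/
import Mathlib

section
/- Let (M,w_d) be a finite pointed model, k ≥ 0, and let M↾k be the restriction of M to worlds of depth at most k. Then for every world w of M↾k, (M↾k, w) is (k − d(w))-bisimilar to (M, w). -/
/-- A finite pointed Kripke model with modality indices `I` and atoms `P`. -/
structure PModel (I P : Type) where
  W : Type
  fin : Finite W
  R : I → W → W → Prop
  V : P → W → Prop
  d : W

variable {I P : Type}

/-- `h`-bisimilarity between worlds of two models (back-and-forth to depth `h`). -/
def Bisim (M N : PModel I P) : ℕ → M.W → N.W → Prop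
  | 0, w, v => ∀ p, M.V p w ↔ N.V p v
  | h+1, w, v => (∀ p, M.V p w ↔ N.V p v)
      ∧ (∀ i w', M.R i w w' → ∃ v', N.R i v v' ∧ Bisim M N h w' v')
      ∧ (∀ i v', N.R i v v' → ∃ w', M.R i w w' ∧ Bisim M N h w' v')

/-- `k`-bisimilarity of pointed models. -/
def PBisim (k : ℕ) (M N : PModel I P) : Prop := Bisim M N k M.d N.d

/-- Directed paths of length `n`. -/
def Steps (M : PModel I P) : ℕ → M.W → M.W → Prop
  | 0, w, v => w = v
  | n+1, w, v => ∃ u i, M.R i w u ∧ Steps M n u v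

/-- Depth of a world: length of a shortest path from the designated world (`⊤` if none). -/
noncomputable def depth (M : PModel I P) (w : M.W) : ℕ∞ :=
  sInf {n : ℕ∞ | ∃ m : ℕ, n = (m : ℕ∞) ∧ Steps M m M.d w}

/-- Bound `b(w) = k − d(w)`, with `⊥` for unreachable worlds. -/
noncomputable def bound (k : ℕ) (M : PModel I P) (w : M.W) : WithBot ℤ :=
  ENat.recTopCoe (⊥ : WithBot ℤ) (fun n : ℕ => (((k : ℤ) - n : ℤ) : WithBot ℤ)) (depth M w)

/-- The bound as a natural number (meaningful when `0 ≤ bound k M w`). -/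
noncomputable def nbound (k : ℕ) (M : PModel I P) (w : M.W) : ℕ :=
  k - (depth M w).toNat
lemma depth_d (M : PModel I P) : depth M M.d = 0 := by
  have h0 : (0 : ℕ∞) ∈ {n : ℕ∞ | ∃ m : ℕ, n = (m : ℕ∞) ∧ Steps M m M.d M.d} :=
    ⟨0, by simp, rfl⟩
  have := sInf_le h0
  simpa [depth, le_zero_iff] using this


/-- The restriction `M↾k` of `M` to the worlds of depth at most `k`. -/
noncomputable def restrict (k : ℕ) (M : PModel I P) : PModel I P where
  W := {w : M.W // depth M w ≤ (k : ℕ∞)}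
  fin := by have := M.fin; exact Subtype.finite
  R := fun i w v => M.R i w.1 v.1
  V := fun p w => M.V p w.1
  d := ⟨M.d, by rw [depth_d]; exact zero_le⟩

lemma steps_snoc (M : PModel I P) {i : I} :
    ∀ m {a b c : M.W}, Steps M m a b → M.R i b c → Steps M (m+1) a c := by
  intro m
  induction m with
  | zero => intro a b c h hr; cases h; exact ⟨c, i, hr, rfl⟩
  | succ n ih =>
    rintro a b c ⟨u, j, hj, hs⟩ hr
    exact ⟨u, j, hj, ih hs hr⟩

lemma depth_step_le (M : PModel I P) {i : I} {u v : M.W} (h : M.R i u v) :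
    depth M v ≤ depth M u + 1 := by
  by_cases htop : depth M u = ⊤
  · simp [htop]
  · have hne : {n : ℕ∞ | ∃ m : ℕ, n = (m : ℕ∞) ∧ Steps M m M.d u}.Nonempty := by
      by_contra hempty
      rw [Set.not_nonempty_iff_eq_empty] at hempty
      exact htop (by simp [depth, hempty])
    have hmem := csInf_mem hne
    obtain ⟨m, hm, hs⟩ := hmem
    have : depth M v ≤ ((m + 1 : ℕ) : ℕ∞) :=
      sInf_le ⟨m + 1, rfl, steps_snoc M m hs h⟩
    calc depth M v ≤ ((m + 1 : ℕ) : ℕ∞) := this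
      _ = depth M u + 1 := by rw [show depth M u = (m : ℕ∞) from hm]; push_cast; ring

lemma restrict_bisim_aux (k : ℕ) (M : PModel I P) :
    ∀ n (w : (restrict k M).W), n + (depth M w.1).toNat ≤ k →
      Bisim (restrict k M) M n w w.1 := by
  intro n
  induction n with
  | zero => intro w _ p; exact Iff.rfl
  | succ n ih =>
    intro w hb
    have hwk : depth M w.1 ≤ (k : ℕ∞) := w.2
    have hwtop : depth M w.1 ≠ ⊤ := by
      intro h; rw [h] at hwk; simp at hwk
    have hcoe : ((depth M w.1).toNat : ℕ∞) = depth M w.1 := ENat.coe_toNat hwtop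
    refine ⟨fun p => Iff.rfl, ?_, ?_⟩
    · intro i w' hr
      refine ⟨w'.1, hr, ih w' ?_⟩
      have h1 : depth M w'.1 ≤ depth M w.1 + 1 := depth_step_le M hr
      have h2 : depth M w'.1 ≤ (((depth M w.1).toNat + 1 : ℕ) : ℕ∞) := by
        rw [Nat.cast_add, Nat.cast_one, hcoe]; exact h1
      have h3 : (depth M w'.1).toNat ≤ (depth M w.1).toNat + 1 := by
        have := ENat.toNat_le_toNat h2 (ENat.coe_ne_top _)
        rwa [ENat.toNat_coe] at this
      omega
    · intro i v' hr
      have h1 : depth M v' ≤ depth M w.1 + 1 := depth_step_le M hr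
      have h2 : depth M v' ≤ (((depth M w.1).toNat + 1 : ℕ) : ℕ∞) := by
        rw [Nat.cast_add, Nat.cast_one, hcoe]; exact h1
      have hk : depth M v' ≤ (k : ℕ∞) := by
        refine h2.trans ?_
        have hle : (depth M w.1).toNat + 1 ≤ k := by omega
        exact_mod_cast hle
      refine ⟨⟨v', hk⟩, hr, ih ⟨v', hk⟩ ?_⟩
      have h3 : (depth M v').toNat ≤ (depth M w.1).toNat + 1 := by
        have := ENat.toNat_le_toNat h2 (ENat.coe_ne_top _)
        rwa [ENat.toNat_coe] at this
      show n + (depth M v').toNat ≤ k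
      omega

/-- Every world `w` of `M↾k` is `(k − d(w))`-bisimilar to `w` in `M`. -/
theorem restrict_bisim (k : ℕ) (M : PModel I P) (w : (restrict k M).W) :
    Bisim (restrict k M) M (k - (depth M w.1).toNat) w w.1 := by
  have hwk : depth M w.1 ≤ (k : ℕ∞) := w.2
  have : (depth M w.1).toNat ≤ k := by
    have := ENat.toNat_le_toNat hwk (by simp)
    simpa using this
  exact restrict_bisim_aux k M _ w (by omega)
end

section
/- If w and v are both maximal representatives of a finite pointed model and w ∼_{b(w)} v, then b(w) = b(v). -/
variable {I P : Type}

/-- `x` represents `y` : `b(x) ≥ b(y) ≥ 0` and `x ∼_{b(y)} y`. -/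
noncomputable def Repr' (k : ℕ) (M : PModel I P) (x y : M.W) : Prop :=
  0 ≤ bound k M y ∧ bound k M y ≤ bound k M x ∧ Bisim M M (nbound k M y) x y

/-- `x` strictly represents `y`. -/
noncomputable def SRepr (k : ℕ) (M : PModel I P) (x y : M.W) : Prop :=
  Repr' k M x y ∧ bound k M y < bound k M x

/-- Maximal representatives. -/
noncomputable def maxRepr (k : ℕ) (M : PModel I P) : Set M.W :=
  {x | 0 ≤ bound k M x ∧ ∀ y, ¬ SRepr k M y x}

/-- Representative class `[x]_{b(x)}`. -/
noncomputable def reprClass (k : ℕ) (M : PModel I P) (x : M.W) : Set M.W :=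
  {y | Bisim M M (nbound k M x) x y}


lemma bisim_symm {M N : PModel I P} : ∀ (n : ℕ) (w : M.W) (v : N.W),
    Bisim M N n w v → Bisim N M n v w := by
  intro n
  induction n with
  | zero => intro w v h p; exact (h p).symm
  | succ n ih =>
    intro w v h
    refine ⟨fun p => (h.1 p).symm, ?_, ?_⟩
    · intro i v' hv'
      obtain ⟨w', hw', hb⟩ := h.2.2 i v' hv'
      exact ⟨w', hw', ih _ _ hb⟩
    · intro i w' hw'
      obtain ⟨v', hv', hb⟩ := h.2.1 i w' hw'
      exact ⟨v', hv', ih _ _ hb⟩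

lemma bisim_mono {M N : PModel I P} : ∀ (n m : ℕ) (w : M.W) (v : N.W),
    m ≤ n → Bisim M N n w v → Bisim M N m w v := by
  intro n
  induction n with
  | zero => intro m w v hm h; rw [Nat.le_zero.mp hm]; exact h
  | succ n ih =>
    intro m w v hm h
    cases m with
    | zero => exact h.1
    | succ m =>
      refine ⟨h.1, ?_, ?_⟩
      · intro i w' hw'
        obtain ⟨v', hv', hb⟩ := h.2.1 i w' hw'
        exact ⟨v', hv', ih _ _ _ (Nat.succ_le_succ_iff.mp hm) hb⟩
      · intro i v' hv'
        obtain ⟨w', hw', hb⟩ := h.2.2 i v' hv'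
        exact ⟨w', hw', ih _ _ _ (Nat.succ_le_succ_iff.mp hm) hb⟩

lemma bound_unpack (k : ℕ) (M : PModel I P) (w : M.W) (hw : 0 ≤ bound k M w) :
    ∃ n : ℕ, depth M w = (n : ℕ∞) ∧ n ≤ k ∧ nbound k M w = k - n ∧
      bound k M w = (((k : ℤ) - n : ℤ) : WithBot ℤ) := by
  unfold bound at hw ⊢
  unfold nbound
  rcases eq_or_ne (depth M w) ⊤ with hd | hd
  · rw [hd] at hw
    simp at hw
  · obtain ⟨n, hn⟩ := WithTop.ne_top_iff_exists.mp hd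
    rw [← hn] at hw ⊢
    refine ⟨n, rfl, ?_, rfl, rfl⟩
    have hw' : (0 : WithBot ℤ) ≤ (((k : ℤ) - n : ℤ) : WithBot ℤ) := hw
    have : (0 : ℤ) ≤ (k : ℤ) - n := by exact_mod_cast hw'
    omega

/-- Maximal representatives that are `b(w)`-bisimilar have equal bounds. -/
theorem maxRepr_bound_eq (k : ℕ) (M : PModel I P) (w v : M.W)
    (hw : w ∈ maxRepr k M) (hv : v ∈ maxRepr k M)
    (hbis : Bisim M M (nbound k M w) w v) :
    bound k M w = bound k M v := by
  obtain ⟨hw0, hwmax⟩ := hw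
  obtain ⟨hv0, hvmax⟩ := hv
  obtain ⟨nw, hdw, hnwk, hnbw, hbw⟩ := bound_unpack k M w hw0
  obtain ⟨nv, hdv, hnvk, hnbv, hbv⟩ := bound_unpack k M v hv0
  rcases lt_trichotomy (bound k M w) (bound k M v) with h | h | h
  · exact absurd ⟨⟨hw0, le_of_lt h, bisim_symm _ _ _ hbis⟩, h⟩ (hwmax v)
  · exact h
  · -- bound v < bound w, so w strictly represents v
    have hle : nbound k M v ≤ nbound k M w := by
      rw [hbw, hbv] at h
      have : (k : ℤ) - nv < (k : ℤ) - nw := by exact_mod_cast h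
      omega
    exact absurd ⟨⟨hv0, le_of_lt h, bisim_mono _ _ _ _ hle hbis⟩, h⟩ (hvmax w)
end

section
/- For every maximal representative x of a finite pointed model M, the bound of x in M equals the bound of its representative class [x]_{b(x)} in the rooted k-contraction of M: b(x) = b([x]_{b(x)}). -/
variable {I P : Type}

lemma bound_d (k : ℕ) (M : PModel I P) : bound k M M.d = ((k : ℤ) : WithBot ℤ) := by
  have h := depth_d M
  simp only [bound, h, ENat.recTopCoe_zero]
  norm_num

lemma bound_le (k : ℕ) (M : PModel I P) (w : M.W) : bound k M w ≤ ((k : ℤ) : WithBot ℤ) := by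
  simp only [bound]
  by_cases hd : depth M w = ⊤
  · simp [hd]
  · lift depth M w to ℕ using hd with n hn
    simp only [ENat.recTopCoe_coe]
    exact_mod_cast (by omega : (k : ℤ) - n ≤ (k:ℤ))

lemma d_mem_maxRepr (k : ℕ) (M : PModel I P) : M.d ∈ maxRepr k M := by
  constructor
  · rw [bound_d]; exact_mod_cast Int.ofNat_nonneg k
  · rintro y ⟨_, hlt⟩
    exact absurd (lt_of_lt_of_le hlt (bound_le k M y)) (by rw [bound_d]; exact lt_irrefl _)

/-- Carrier of the rooted k-contraction: representative classes of maximal representatives. -/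
def ContrW (k : ℕ) (M : PModel I P) : Type :=
  {S : Set M.W // ∃ x ∈ maxRepr k M, S = reprClass k M x}

instance (k : ℕ) (M : PModel I P) : Finite (ContrW k M) := by
  have := M.fin
  exact Subtype.finite

/-- The rooted `k`-contraction. -/
noncomputable def rootedContraction (k : ℕ) (M : PModel I P) : PModel I P where
  W := ContrW k M
  fin := inferInstance
  R := fun i S T => ∃ x ∈ maxRepr k M, ∃ y ∈ maxRepr k M,
        S.1 = reprClass k M x ∧ T.1 = reprClass k M y ∧
        0 < bound k M x ∧ ∃ z, M.R i x z ∧ Bisim M M (nbound k M x - 1) y z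
  V := fun p S => ∃ x ∈ maxRepr k M, S.1 = reprClass k M x ∧ M.V p x
  d := ⟨reprClass k M M.d, M.d, d_mem_maxRepr k M, rfl⟩

/-! ### Auxiliary lemmas -/

section Aux

variable {M N K : PModel I P}

lemma Bisim.succ_le : ∀ {h : ℕ} {w v}, Bisim M N (h+1) w v → Bisim M N h w v := by
  intro h
  induction h with
  | zero => exact fun hb => hb.1
  | succ n ih =>
    rintro w v ⟨ha, hf, hb⟩
    refine ⟨ha, fun i w' hr => ?_, fun i v' hr => ?_⟩
    · obtain ⟨v', h1, h2⟩ := hf i w' hr; exact ⟨v', h1, ih h2⟩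
    · obtain ⟨w', h1, h2⟩ := hb i v' hr; exact ⟨w', h1, ih h2⟩

lemma Bisim.mono {h' h : ℕ} (hle : h' ≤ h) {w v} (hb : Bisim M N h w v) :
    Bisim M N h' w v := by
  induction hle with
  | refl => exact hb
  | step _ ih => exact ih hb.succ_le

lemma Bisim.refl : ∀ (h : ℕ) (w : M.W), Bisim M M h w w := by
  intro h
  induction h with
  | zero => exact fun w p => Iff.rfl
  | succ n ih =>
    exact fun w => ⟨fun p => Iff.rfl,
      fun i w' hr => ⟨w', hr, ih w'⟩, fun i v' hr => ⟨v', hr, ih v'⟩⟩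

lemma Bisim.symm : ∀ {h : ℕ} {w : M.W} {v : N.W}, Bisim M N h w v → Bisim N M h v w := by
  intro h
  induction h with
  | zero => exact fun hb p => (hb p).symm
  | succ n ih =>
    rintro w v ⟨ha, hf, hb⟩
    refine ⟨fun p => (ha p).symm, fun i v' hr => ?_, fun i w' hr => ?_⟩
    · obtain ⟨w', h1, h2⟩ := hb i v' hr; exact ⟨w', h1, ih h2⟩
    · obtain ⟨v', h1, h2⟩ := hf i w' hr; exact ⟨v', h1, ih h2⟩

lemma Bisim.trans : ∀ {h : ℕ} {a : M.W} {b : N.W} {c : K.W},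
    Bisim M N h a b → Bisim N K h b c → Bisim M K h a c := by
  intro h
  induction h with
  | zero => exact fun hab hbc p => (hab p).trans (hbc p)
  | succ n ih =>
    rintro a b c ⟨ha1, hf1, hb1⟩ ⟨ha2, hf2, hb2⟩
    refine ⟨fun p => (ha1 p).trans (ha2 p), fun i w' hr => ?_, fun i v' hr => ?_⟩
    · obtain ⟨b', hb', h1⟩ := hf1 i w' hr
      obtain ⟨c', hc', h2⟩ := hf2 i b' hb'
      exact ⟨c', hc', ih h1 h2⟩
    · obtain ⟨b', hb', h2⟩ := hb2 i v' hr
      obtain ⟨a', ha', h1⟩ := hb1 i b' hb'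
      exact ⟨a', ha', ih h1 h2⟩

lemma Steps.snoc {i : I} {c : M.W} : ∀ {m : ℕ} {a b : M.W},
    Steps M m a b → M.R i b c → Steps M (m+1) a c := by
  intro m
  induction m with
  | zero => rintro a b rfl hr; exact ⟨c, i, hr, rfl⟩
  | succ n ih =>
    rintro a b ⟨u, j, hr, hs⟩ hrc
    exact ⟨u, j, hr, ih hs hrc⟩

lemma Steps.unsnoc : ∀ {m : ℕ} {a c : M.W},
    Steps M (m+1) a c → ∃ b i, Steps M m a b ∧ M.R i b c := by
  intro m
  induction m with
  | zero => rintro a c ⟨u, i, hr, rfl⟩; exact ⟨a, i, rfl, hr⟩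
  | succ n ih =>
    rintro a c ⟨u, j, hr, hs⟩
    obtain ⟨b, i, hs', hr'⟩ := ih hs
    exact ⟨b, i, ⟨u, j, hr, hs'⟩, hr'⟩

lemma depth_le_of_steps {m : ℕ} {w : M.W} (h : Steps M m M.d w) : depth M w ≤ (m : ℕ∞) :=
  sInf_le ⟨m, rfl, h⟩

lemma depth_spec {w : M.W} {m : ℕ} (h : depth M w = (m : ℕ∞)) :
    Steps M m M.d w ∧ ∀ m' : ℕ, Steps M m' M.d w → m ≤ m' := by
  have hne : {n : ℕ | Steps M n M.d w}.Nonempty := by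
    by_contra hemp
    rw [Set.not_nonempty_iff_eq_empty] at hemp
    have : {n : ℕ∞ | ∃ m : ℕ, n = (m : ℕ∞) ∧ Steps M m M.d w} = ∅ := by
      ext n
      simp only [Set.mem_setOf_eq, Set.mem_empty_iff_false, iff_false]
      rintro ⟨m', rfl, hs⟩
      exact absurd hs (by simp [Set.eq_empty_iff_forall_notMem] at hemp; exact hemp m')
    rw [depth, this, sInf_empty] at h
    exact absurd h.symm (by simp)
  have hdepth : depth M w = ((sInf {n : ℕ | Steps M n M.d w} : ℕ) : ℕ∞) := by
    apply le_antisymm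
    · exact sInf_le ⟨_, rfl, Nat.sInf_mem hne⟩
    · apply le_sInf
      rintro n ⟨m', rfl, hs⟩
      exact_mod_cast Nat.sInf_le hs
  have hm : m = sInf {n : ℕ | Steps M n M.d w} := by
    rw [h] at hdepth; exact_mod_cast hdepth
  constructor
  · rw [hm]; exact Nat.sInf_mem hne
  · intro m' hs; rw [hm]; exact Nat.sInf_le hs

lemma bound_cast {k : ℕ} {w : M.W} {m : ℕ} (h : depth M w = (m : ℕ∞)) :
    bound k M w = (((k : ℤ) - m : ℤ) : WithBot ℤ) := by
  simp [bound, h]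

lemma nbound_cast {k : ℕ} {w : M.W} {m : ℕ} (h : depth M w = (m : ℕ∞)) :
    nbound k M w = k - m := by
  simp [nbound, h]

lemma exists_depth_of_bound_nonneg {k : ℕ} {w : M.W} (h : 0 ≤ bound k M w) :
    ∃ m : ℕ, m ≤ k ∧ depth M w = (m : ℕ∞) := by
  by_cases hd : depth M w = ⊤
  · exfalso
    rw [bound, hd] at h
    simp at h
  · lift depth M w to ℕ using hd with n hn
    refine ⟨n, ?_, rfl⟩
    rw [bound_cast hn.symm] at h
    have : (0 : ℤ) ≤ (k : ℤ) - n := by exact_mod_cast h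
    omega

/-- Maximality caps the bound of `nbound x`-bisimilar worlds. -/
lemma bound_le_of_maxRepr {k : ℕ} {x z : M.W} (hx : x ∈ maxRepr k M)
    (hb : Bisim M M (nbound k M x) z x) : bound k M z ≤ bound k M x := by
  by_contra hlt
  push_neg at hlt
  exact hx.2 z ⟨⟨hx.1, le_of_lt hlt, hb⟩, hlt⟩

lemma nbound_mono {k : ℕ} {u v : M.W} (hu : 0 ≤ bound k M u) (hv : 0 ≤ bound k M v)
    (h : bound k M u ≤ bound k M v) : nbound k M u ≤ nbound k M v := by
  obtain ⟨mu, hmu, hdu⟩ := exists_depth_of_bound_nonneg hu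
  obtain ⟨mv, hmv, hdv⟩ := exists_depth_of_bound_nonneg hv
  rw [bound_cast hdu, bound_cast hdv] at h
  rw [nbound_cast hdu, nbound_cast hdv]
  have : (k : ℤ) - mu ≤ (k : ℤ) - mv := by exact_mod_cast h
  omega

/-- Every world with nonnegative bound has a maximal representative. -/
lemma exists_maxRepr {k : ℕ} (u : M.W) (hu : 0 ≤ bound k M u) :
    ∃ v ∈ maxRepr k M, Repr' k M v u := by
  have hfin := M.fin
  have hsne : ({v | Repr' k M v u} : Set M.W).Nonempty :=
    ⟨u, hu, le_rfl, Bisim.refl _ u⟩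
  obtain ⟨v, hv, hmax⟩ := Set.Finite.exists_maximalFor (bound k M)
    {v | Repr' k M v u} (Set.toFinite _) hsne
  obtain ⟨h0, huv, hbis⟩ := id hv
  refine ⟨v, ⟨le_trans h0 huv, ?_⟩, hv⟩
  rintro w ⟨⟨h1, h2, h3⟩, hlt⟩
  have hw : Repr' k M w u :=
    ⟨hu, huv.trans h2, Bisim.trans (h3.mono (nbound_mono hu h1 huv)) hbis⟩
  exact absurd (hmax hw (le_of_lt hlt)) (not_le_of_gt hlt)

/-- Two maximal representatives with the same class have equal bounds and are bisimilar. -/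
lemma maxRepr_class_eq {k : ℕ} {w y : M.W} (hw : w ∈ maxRepr k M) (hy : y ∈ maxRepr k M)
    (h : reprClass k M w = reprClass k M y) :
    bound k M w = bound k M y ∧ Bisim M M (nbound k M w) w y := by
  have hy_in : y ∈ reprClass k M w := by rw [h]; exact Bisim.refl _ y
  have hw_in : w ∈ reprClass k M y := by rw [← h]; exact Bisim.refl _ w
  have h1 : Bisim M M (nbound k M w) w y := hy_in
  have h2 : Bisim M M (nbound k M y) y w := hw_in
  refine ⟨le_antisymm ?_ ?_, h1⟩
  · exact bound_le_of_maxRepr hy h2.symm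
  · exact bound_le_of_maxRepr hw h1.symm

lemma exists_depth_of_le {M : PModel I P} {w : M.W} {m : ℕ} (h : depth M w ≤ (m : ℕ∞)) :
    ∃ n : ℕ, n ≤ m ∧ depth M w = (n : ℕ∞) := by
  have hne : depth M w ≠ ⊤ := by
    intro htop
    rw [htop, top_le_iff] at h
    simp at h
  lift depth M w to ℕ using hne with n hn
  exact ⟨n, by exact_mod_cast h, rfl⟩

end Aux

/-- Depth in the rooted contraction is at most depth in the original model. -/
lemma depth_contr_le (k : ℕ) (M : PModel I P) :
    ∀ m : ℕ, ∀ x : M.W, ∀ hx : x ∈ maxRepr k M, depth M x = (m : ℕ∞) →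
      depth (rootedContraction k M)
        (⟨reprClass k M x, x, hx, rfl⟩ : ContrW k M) ≤ (m : ℕ∞) := by
  intro m
  induction m using Nat.strong_induction_on with
  | _ m ih =>
  intro x hx hdx
  match m, hdx, ih with
  | 0, hdx, _ =>
    have hsteps : Steps M 0 M.d x := (depth_spec hdx).1
    have hxd : M.d = x := hsteps
    have heq : (⟨reprClass k M x, x, hx, rfl⟩ : ContrW k M) = (rootedContraction k M).d := by
      apply Subtype.ext
      show reprClass k M x = reprClass k M M.d
      rw [hxd]
    rw [heq, depth_d]
    exact zero_le
  | m + 1, hdx, ih =>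
    have hk1 : m + 1 ≤ k := by
      have h0 := hx.1
      rw [bound_cast hdx] at h0
      have h0' : (0 : ℤ) ≤ (k : ℤ) - ((m + 1 : ℕ) : ℤ) := by exact_mod_cast h0
      push_cast at h0'; omega
    obtain ⟨hsx, hminx⟩ := depth_spec hdx
    obtain ⟨u, i, hsu, hRux⟩ := Steps.unsnoc hsx
    -- depth u = m
    obtain ⟨mu, hmu_le, hmu⟩ := exists_depth_of_le (depth_le_of_steps hsu)
    have hmu_ge : m ≤ mu := by
      have := hminx (mu + 1) (Steps.snoc (depth_spec hmu).1 hRux)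
      omega
    have hmu_eq : mu = m := le_antisymm hmu_le hmu_ge
    -- bound u ≥ 0
    have hbu : (0 : WithBot ℤ) ≤ bound k M u := by
      rw [bound_cast hmu]
      exact_mod_cast (by omega : (0 : ℤ) ≤ (k : ℤ) - (mu : ℤ))
    -- maximal representative v of u
    obtain ⟨v, hv, h0u, huv, hbisvu⟩ := exists_maxRepr u hbu
    obtain ⟨mv, hmvk, hdv⟩ := exists_depth_of_bound_nonneg hv.1
    have hmv_le : mv ≤ mu := by
      rw [bound_cast hmu, bound_cast hdv] at huv
      have h' : (k : ℤ) - (mu : ℤ) ≤ (k : ℤ) - (mv : ℤ) := by exact_mod_cast huv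
      omega
    -- unfold bisimulation one step
    have hnbu : nbound k M u = k - mu := nbound_cast hmu
    have hbis' : Bisim M M ((k - mu - 1) + 1) v u := by
      rw [(by omega : (k - mu - 1) + 1 = k - mu), ← hnbu]
      exact hbisvu
    obtain ⟨z, hRvz, hzx⟩ := hbis'.2.2 i x hRux
    -- depth z ≤ mv + 1
    obtain ⟨mz, hmz_le, hmz⟩ :=
      exists_depth_of_le (depth_le_of_steps (Steps.snoc (depth_spec hdv).1 hRvz))
    -- bound z ≤ bound x via maximality of x
    have hnbx : nbound k M x = k - mu - 1 := by
      rw [nbound_cast hdx]; omega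
    have hbzx : bound k M z ≤ bound k M x :=
      bound_le_of_maxRepr hx (by rw [hnbx]; exact hzx)
    have hmz_ge : m + 1 ≤ mz := by
      rw [bound_cast hmz, bound_cast hdx] at hbzx
      have h' : (k : ℤ) - (mz : ℤ) ≤ (k : ℤ) - ((m + 1 : ℕ) : ℤ) := by exact_mod_cast hbzx
      push_cast at h'; omega
    have hmv_eq : mv = m := by omega
    -- IH gives a path to [v]
    have hdvN := ih mv (by omega) v hv hdv
    obtain ⟨mN, hmN_le, hmN⟩ := exists_depth_of_le hdvN
    -- the edge [v] → [x]
    have hedge : (rootedContraction k M).R i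
        (⟨reprClass k M v, v, hv, rfl⟩ : ContrW k M)
        (⟨reprClass k M x, x, hx, rfl⟩ : ContrW k M) := by
      refine ⟨v, hv, x, hx, rfl, rfl, ?_, z, hRvz, ?_⟩
      · rw [bound_cast hdv]
        exact_mod_cast (by omega : (0 : ℤ) < (k : ℤ) - (mv : ℤ))
      · have hnbv : nbound k M v = k - mv := nbound_cast hdv
        rw [hnbv]
        exact (Bisim.mono (by omega) hzx).symm
    have hstep : Steps (rootedContraction k M) (mN + 1) (rootedContraction k M).d
        (⟨reprClass k M x, x, hx, rfl⟩ : ContrW k M) :=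
      Steps.snoc (depth_spec hmN).1 hedge
    calc depth (rootedContraction k M) (⟨reprClass k M x, x, hx, rfl⟩ : ContrW k M)
        ≤ ((mN + 1 : ℕ) : ℕ∞) := depth_le_of_steps hstep
      _ ≤ ((m + 1 : ℕ) : ℕ∞) := by exact_mod_cast (by omega : mN + 1 ≤ m + 1)

/-- Depth in the original model is at most the length of any path in the contraction. -/
lemma depth_le_of_contr_steps (k : ℕ) (M : PModel I P) :
    ∀ m : ℕ, ∀ S : ContrW k M,
      Steps (rootedContraction k M) m (rootedContraction k M).d S →
      ∀ w ∈ maxRepr k M, S.1 = reprClass k M w → depth M w ≤ (m : ℕ∞) := by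
  intro m
  induction m with
  | zero =>
    intro S hS w hw hSw
    have hSd : (rootedContraction k M).d = S := hS
    have hclass : reprClass k M M.d = reprClass k M w := by
      rw [← hSw, ← hSd]
      rfl
    obtain ⟨hbeq, -⟩ := maxRepr_class_eq (d_mem_maxRepr k M) hw hclass
    obtain ⟨mw, hmwk, hdw⟩ := exists_depth_of_bound_nonneg hw.1
    rw [bound_d, bound_cast hdw] at hbeq
    have : (k : ℤ) = (k : ℤ) - mw := by exact_mod_cast hbeq
    have hmw0 : mw = 0 := by omega
    rw [hdw, hmw0]
  | succ m ihm =>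
    intro S hS w hw hSw
    obtain ⟨T, i, hT, hTS⟩ := Steps.unsnoc hS
    obtain ⟨a, ha, b, hb, hTa, hSb, hpos, z, hRaz, hbz⟩ := hTS
    -- depth a ≤ m
    have hda := ihm T hT a ha hTa
    obtain ⟨ma, hmak, hdma⟩ := exists_depth_of_bound_nonneg (le_of_lt hpos)
    have hma_le : ma ≤ m := by rw [hdma] at hda; exact_mod_cast hda
    have hma_lt : ma < k := by
      rw [bound_cast hdma] at hpos
      have : (0 : ℤ) < (k : ℤ) - ma := by exact_mod_cast hpos
      omega
    -- depth z ≤ ma + 1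
    obtain ⟨mz, hmz_le, hmz⟩ :=
      exists_depth_of_le (depth_le_of_steps (Steps.snoc (depth_spec hdma).1 hRaz))
    -- depth b ≤ m + 1
    obtain ⟨mb, hmbk, hdmb⟩ := exists_depth_of_bound_nonneg hb.1
    have hnba : nbound k M a = k - ma := nbound_cast hdma
    have hmb_le : mb ≤ m + 1 := by
      by_cases hcase : mb ≤ ma
      · omega
      · -- mb ≥ ma + 1 : use maximality of b against z
        have hnbb : nbound k M b = k - mb := nbound_cast hdmb
        have hbisbz : Bisim M M (nbound k M b) z b := by
          refine (Bisim.mono ?_ hbz).symm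
          rw [hnbb, hnba]; omega
        have hrepr : Repr' k M z b := by
          refine ⟨hb.1, ?_, hbisbz⟩
          rw [bound_cast hdmb, bound_cast hmz]
          exact_mod_cast (by omega : (k : ℤ) - mb ≤ (k : ℤ) - mz)
        have hnlt : ¬ bound k M b < bound k M z := fun hlt => hb.2 z ⟨hrepr, hlt⟩
        rw [bound_cast hdmb, bound_cast hmz, not_lt] at hnlt
        have : (k : ℤ) - mz ≤ (k : ℤ) - mb := by exact_mod_cast hnlt
        omega
    -- transfer to w via equal classes
    have hclass : reprClass k M b = reprClass k M w := by rw [← hSb, ← hSw]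
    obtain ⟨hbeq, -⟩ := maxRepr_class_eq hb hw hclass
    obtain ⟨mw, hmwk, hdw⟩ := exists_depth_of_bound_nonneg hw.1
    rw [bound_cast hdmb, bound_cast hdw] at hbeq
    have : (k : ℤ) - mb = (k : ℤ) - mw := by exact_mod_cast hbeq
    rw [hdw]
    exact_mod_cast (by omega : mw ≤ m + 1)

/-- A maximal representative has the same bound as its representative class in the
rooted `k`-contraction. -/
theorem bound_reprClass_eq (k : ℕ) (M : PModel I P) (x : M.W)
    (hx : x ∈ maxRepr k M) :
    bound k (rootedContraction k M) ⟨reprClass k M x, x, hx, rfl⟩ = bound k M x := by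
  obtain ⟨m, hmk, hdx⟩ := exists_depth_of_bound_nonneg hx.1
  have hle := depth_contr_le k M m x hx hdx
  obtain ⟨mN, hmN_le, hmN⟩ := exists_depth_of_le hle
  have hge := depth_le_of_contr_steps k M mN
    (⟨reprClass k M x, x, hx, rfl⟩ : ContrW k M) (depth_spec hmN).1 x hx rfl
  have hm_le : m ≤ mN := by rw [hdx] at hge; exact_mod_cast hge
  have : mN = m := le_antisymm hmN_le hm_le
  subst this
  rw [bound_cast hmN, bound_cast hdx]
end
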